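/- Let N ⊂ M be a finite index II₁ subfactor. The rotation ρ_k on N′ ∩ M_k, defined by ⟨ρ_k(x), y₁ ⊗_N ⋯ ⊗_N y_{k+1}⟩ = ⟨x, y_{k+1} ⊗_N y₁ ⊗_N ⋯ ⊗_N y_k⟩, satisfies (ρ_k)^{k+1} = id. -/

import Mathlib

/-!
STATEMENT 8: Let N ⊂ M be a finite index II₁ subfactor.  The rotation ρ_k on N′ ∩ M_k,
characterized by ⟨ρ_k(x), y₁ ⊗_N ⋯ ⊗_N y_{k+1}⟩ = ⟨x, y_{k+1} ⊗_N y₁ ⊗_N ⋯ ⊗_N y_k⟩,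
satisfies (ρ_k)^{k+1} = id.

Model: K = L²(M_k) ≅ ⊗_N^{k+1} L²(M) with multi-tensor map t : (Fin (k+1) → A) → K whose
span is dense; S ⊆ K is the set of N-central vectors N' ∩ M_k, preserved by ρ; ρ is
characterized on S by the cyclic-shift inner product identity.
-/

theorem rotation_has_period_k_plus_one
    (A : Type) (k : ℕ)
    (K : Type) [NormedAddCommGroup K] [InnerProductSpace ℂ K] [CompleteSpace K]
    (t : (Fin (k + 1) → A) → K)
    (hdense : Dense ((Submodule.span ℂ (Set.range t) : Submodule ℂ K) : Set K))
    (S : Set K) (ρ : K →L[ℂ] K)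
    (hmaps : ∀ x ∈ S, ρ x ∈ S)
    (hrot : ∀ x ∈ S, ∀ y : Fin (k + 1) → A,
      (inner ℂ (ρ x) (t y) : ℂ) = inner ℂ x (t fun j => y (j - 1))) :
    ∀ x ∈ S, (ρ ^ (k + 1)) x = x := by
  intro x hx
  open Fin.NatCast in
  have key : ∀ n : ℕ, (ρ ^ n) x ∈ S ∧ ∀ y : Fin (k + 1) → A,
      (inner ℂ ((ρ ^ n) x) (t y) : ℂ) = inner ℂ x (t fun j => y (j - (n : Fin (k + 1)))) := by
    intro n
    induction n with
    | zero => simpa using hx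
    | succ n ih =>
      have hpow : (ρ ^ (n + 1)) x = ρ ((ρ ^ n) x) := by
        rw [pow_succ']; rfl
      constructor
      · rw [hpow]; exact hmaps _ ih.1
      · intro y
        rw [hpow, hrot _ ih.1 y, ih.2]
        congr 1
        · congr 1
          funext j
          congr 1
          push_cast
          open Fin.CommRing in ring
  have hk : ∀ y : Fin (k + 1) → A,
      (inner ℂ ((ρ ^ (k + 1)) x) (t y) : ℂ) = inner ℂ x (t y) := by
    intro y
    rw [(key (k + 1)).2 y]
    open Fin.NatCast in
    have : (fun j : Fin (k + 1) => y (j - ((k + 1 : ℕ) : Fin (k + 1)))) = y := by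
      funext j
      simp [Fin.natCast_self]
    rw [this]
  refine hdense.eq_of_inner_left (𝕜 := ℂ) ?_
  intro v hv
  induction hv using Submodule.span_induction with
  | mem v hv => obtain ⟨y, rfl⟩ := hv; exact hk y
  | zero => simp
  | add a b _ _ ha hb => simp only [inner_add_right, ha, hb]
  | smul c a _ ha => simp only [inner_smul_right, ha]
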